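/- Let s : ℤ → ℝ satisfy s(t) ≥ 0 for all t, and let ε ≥ 0 satisfy |s(t+1) − s(t)| ≤ ε·s(t) for all t ∈ ℤ. Let w ≥ 1 be an integer with w·ε < 1, let n : ℤ → ℝ be positive, and set n_w = Σ_{i=−w}^{w} n(t + i). Then Σ_{i=−w}^{w} (n(t+i)/n_w²)·s(t + i) ≤ (1/n_w)·(1 + w·ε/(1 − w·ε))·s(t). -/

import Mathlib

/-- Variance-deviation step in the proof of the paper's Theorem 7:
`Σ_i (n_{t+i}/n_w²)·s_{t+i} ≤ (1/n_w)·(1 + wε/(1 − wε))·s_t`. -/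
theorem weighted_variance_bound (s : ℤ → ℝ) (hs : ∀ t, 0 ≤ s t)
    (ε : ℝ) (hε : 0 ≤ ε) (hdiff : ∀ t : ℤ, |s (t + 1) - s t| ≤ ε * s t)
    (w : ℕ) (hw : 1 ≤ w) (hwε : (w : ℝ) * ε < 1)
    (n : ℤ → ℝ) (hn : ∀ t, 0 < n t) (t : ℤ)
    (nw : ℝ) (hnw : nw = ∑ i ∈ Finset.Icc (-(w : ℤ)) (w : ℤ), n (t + i)) :
    ∑ i ∈ Finset.Icc (-(w : ℤ)) (w : ℤ), (n (t + i) / nw ^ 2) * s (t + i)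
      ≤ (1 / nw) * (1 + (w : ℝ) * ε / (1 - (w : ℝ) * ε)) * s t := by
  have hw1 : (1:ℝ) ≤ (w:ℝ) := by exact_mod_cast hw
  have hwε0 : 0 ≤ (w:ℝ) * ε := by positivity
  have h1mw : 0 < 1 - (w:ℝ) * ε := by linarith
  have hε1 : 0 < 1 - ε := by nlinarith
  -- forward bound
  have hfwd : ∀ u : ℤ, ∀ k : ℕ, s (u + k) ≤ (1 + ε) ^ k * s u := by
    intro u k
    induction k with
    | zero => simp
    | succ k ih =>
      have h := abs_le.mp (hdiff (u + k))
      have h2 : s (u + k + 1) ≤ (1 + ε) * s (u + k) := by nlinarith [hs (u + k)]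
      have h3 : (1 + ε) * s (u + k) ≤ (1 + ε) * ((1 + ε) ^ k * s u) := by
        apply mul_le_mul_of_nonneg_left ih; linarith
      calc s (u + (k + 1 : ℕ)) = s (u + k + 1) := by push_cast; ring_nf
        _ ≤ (1 + ε) * s (u + k) := h2
        _ ≤ (1 + ε) * ((1 + ε) ^ k * s u) := h3
        _ = (1 + ε) ^ (k + 1) * s u := by ring
  -- backward bound
  have hbwd : ∀ u : ℤ, ∀ k : ℕ, (1 - ε) ^ k * s (u - k) ≤ s u := by
    intro u k
    induction k with
    | zero => simp
    | succ k ih =>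
      have h := abs_le.mp (hdiff (u - (k + 1 : ℕ)))
      have heq : u - (k + 1 : ℕ) + 1 = u - k := by push_cast; ring
      rw [heq] at h
      have h2 : (1 - ε) * s (u - (k + 1 : ℕ)) ≤ s (u - k) := by
        nlinarith [hs (u - (k + 1 : ℕ))]
      have hp : (0:ℝ) ≤ (1 - ε) ^ k := by positivity
      calc (1 - ε) ^ (k + 1) * s (u - (k + 1 : ℕ))
          = (1 - ε) ^ k * ((1 - ε) * s (u - (k + 1 : ℕ))) := by ring
        _ ≤ (1 - ε) ^ k * s (u - k) := mul_le_mul_of_nonneg_left h2 hp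
        _ ≤ s u := ih
  -- Bernoulli: 1 - wε ≤ (1-ε)^w
  have hbern : 1 - (w:ℝ) * ε ≤ (1 - ε) ^ w := by
    have := one_add_mul_le_pow (a := -ε) (by linarith) w
    rw [← sub_eq_add_neg] at this
    linarith
  have hprod : ∀ k : ℕ, k ≤ w → (1 - (w:ℝ) * ε) * (1 + ε) ^ k ≤ 1 := by
    intro k hk
    have h1 : (1 + ε) ^ k ≤ (1 + ε) ^ w := by
      apply pow_le_pow_right₀ (by linarith) hk
    have h2 : (1 - (w:ℝ) * ε) * (1 + ε) ^ w ≤ (1 - ε) ^ w * (1 + ε) ^ w := by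
      apply mul_le_mul_of_nonneg_right hbern (by positivity)
    have h3 : (1 - ε) ^ w * (1 + ε) ^ w = (1 - ε ^ 2) ^ w := by
      rw [← mul_pow]; ring_nf
    have h4 : (1 - ε ^ 2 : ℝ) ^ w ≤ 1 := by
      apply pow_le_one₀ (by nlinarith) (by nlinarith)
    nlinarith [pow_nonneg (by linarith : (0:ℝ) ≤ 1 + ε) k]
  -- pointwise bound
  have hpt : ∀ i ∈ Finset.Icc (-(w : ℤ)) (w : ℤ),
      (1 - (w:ℝ) * ε) * s (t + i) ≤ s t := by
    intro i hi
    simp only [Finset.mem_Icc] at hi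
    rcases le_or_gt 0 i with hi0 | hi0
    · set k := i.toNat with hk
      have hik : (i : ℤ) = (k : ℤ) := (Int.toNat_of_nonneg hi0).symm
      have hkw : k ≤ w := by omega
      have h1 : s (t + i) ≤ (1 + ε) ^ k * s t := by rw [hik]; exact hfwd t k
      have := hprod k hkw
      nlinarith [hs t, hs (t + i), pow_nonneg (by linarith : (0:ℝ) ≤ 1 + ε) k]
    · set k := (-i).toNat with hk
      have hik : t + i = t - (k : ℤ) := by omega
      have hkw : k ≤ w := by omega
      have h1 : (1 - ε) ^ k * s (t + i) ≤ s t := by rw [hik]; exact hbwd t k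
      have h2 : (1 - (w:ℝ) * ε) ≤ (1 - ε) ^ w := hbern
      have h3 : (1 - ε) ^ w ≤ (1 - ε) ^ k :=
        pow_le_pow_of_le_one (by linarith) (by linarith) hkw
      nlinarith [hs (t + i)]
  -- nw > 0
  have hnw0 : 0 < nw := by
    rw [hnw]
    apply Finset.sum_pos (fun i _ => hn (t + i))
    exact ⟨0, by simp⟩
  -- sum bound
  have hsum : ∑ i ∈ Finset.Icc (-(w : ℤ)) (w : ℤ), (n (t + i) / nw ^ 2) * s (t + i)
      ≤ ∑ i ∈ Finset.Icc (-(w : ℤ)) (w : ℤ), (n (t + i) / nw ^ 2) * (s t / (1 - (w:ℝ) * ε)) := by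
    apply Finset.sum_le_sum
    intro i hi
    apply mul_le_mul_of_nonneg_left _ (div_nonneg (hn _).le (by positivity))
    rw [le_div_iff₀ h1mw]
    have := hpt i hi
    linarith [hpt i hi]
  refine hsum.trans ?_
  rw [← Finset.sum_mul]
  have : ∑ i ∈ Finset.Icc (-(w : ℤ)) (w : ℤ), n (t + i) / nw ^ 2 = 1 / nw := by
    rw [← Finset.sum_div, ← hnw]
    field_simp
  rw [this]
  have hrhs : (1 / nw) * (1 + (w : ℝ) * ε / (1 - (w : ℝ) * ε)) * s t
      = 1 / nw * (s t / (1 - (w:ℝ) * ε)) := by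
    field_simp
    ring
  rw [hrhs]
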